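/- arXiv:2002.12873 — 2 statements merged into one kernel-verified Lean document; each statement's English description precedes it below -/
import Mathlib

section
/- With the notation of the projected-LS identity, writing l̃ = l + v with l = P a (P orthonormal columns), the error e := l̂ − l̃ satisfies e = −I_M (Ψ_M^⊤Ψ_M)^{−1} I_M^⊤ Ψ (l + v), and hence ‖l̂ − l̃‖ ≤ ‖(Ψ_M^⊤Ψ_M)^{−1}‖ · (dist(P̂, P)·‖l‖ + ‖v‖). -/
open Matrix BigOperators

noncomputable def specNorm {m n : Type*} [Fintype m] [Fintype n] [DecidableEq n]
    (A : Matrix m n ℝ) : ℝ :=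
  ‖LinearMap.toContinuousLinearMap (Matrix.toEuclideanLin A)‖

noncomputable def distP {n r : ℕ} (Q P : Matrix (Fin n) (Fin r) ℝ) : ℝ :=
  specNorm ((1 - Q * Qᵀ) * P)

def selMat {n : ℕ} (M : Finset (Fin n)) : Matrix (Fin n) {i // i ∈ M} ℝ :=
  fun i j => if (j : Fin n) = i then 1 else 0

noncomputable def enorm' {n : ℕ} (v : Fin n → ℝ) : ℝ :=
  Real.sqrt (∑ i, v i ^ 2)

noncomputable def smin {m n : Type*} [Fintype m] [Fintype n] [DecidableEq m] [DecidableEq n]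
    (A : Matrix m n ℝ) : ℝ :=
  Real.sqrt (⨅ i, (show (Aᵀ * A).IsHermitian by
    simpa [Matrix.conjTranspose_eq_transpose_of_trivial] using Matrix.isHermitian_conjTranspose_mul_self A).eigenvalues i)

noncomputable def lamMax {m : Type*} [Fintype m] [DecidableEq m]
    {A : Matrix m m ℝ} (hA : A.IsHermitian) : ℝ :=
  ⨆ i, hA.eigenvalues i

noncomputable def lamMin {m : Type*} [Fintype m] [DecidableEq m]
    {A : Matrix m m ℝ} (hA : A.IsHermitian) : ℝ :=
  ⨅ i, hA.eigenvalues i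

noncomputable def eigDesc {n : ℕ} {A : Matrix (Fin n) (Fin n) ℝ} (hA : A.IsHermitian)
    (k : ℕ) : ℝ :=
  ((List.ofFn hA.eigenvalues).mergeSort (fun a b => decide (b ≤ a))).getD k 0

noncomputable def en {ι : Type*} [Fintype ι] (v : ι → ℝ) : ℝ := Real.sqrt (∑ i, v i ^ 2)

lemma enorm_eq_en {n : ℕ} (v : Fin n → ℝ) : enorm' v = en v := rfl

lemma en_eq_norm {ι : Type*} [Fintype ι] (v : ι → ℝ) :
    en v = ‖(WithLp.equiv 2 (ι → ℝ)).symm v‖ := by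
  rw [EuclideanSpace.norm_eq, en]
  simp [sq_abs]

lemma en_nonneg {ι : Type*} [Fintype ι] (v : ι → ℝ) : 0 ≤ en v := Real.sqrt_nonneg _

lemma en_neg {ι : Type*} [Fintype ι] (v : ι → ℝ) : en (-v) = en v := by
  simp [en]

lemma en_add_le {ι : Type*} [Fintype ι] (v w : ι → ℝ) : en (v + w) ≤ en v + en w := by
  rw [en_eq_norm, en_eq_norm, en_eq_norm]
  have h : (WithLp.equiv 2 (ι → ℝ)).symm (v + w)
      = (WithLp.equiv 2 (ι → ℝ)).symm v + (WithLp.equiv 2 (ι → ℝ)).symm w := rfl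
  rw [h]
  exact norm_add_le _ _

lemma mulVec_en_le {m ι : Type*} [Fintype m] [Fintype ι] [DecidableEq ι]
    (A : Matrix m ι ℝ) (x : ι → ℝ) :
    en (A *ᵥ x) ≤ specNorm A * en x := by
  rw [en_eq_norm, en_eq_norm, specNorm]
  have h : (WithLp.equiv 2 (m → ℝ)).symm (A *ᵥ x)
      = Matrix.toEuclideanLin A ((WithLp.equiv 2 (ι → ℝ)).symm x) := rfl
  rw [h]
  exact (LinearMap.toContinuousLinearMap _).le_opNorm _

lemma cs {ι : Type*} [Fintype ι] (x y : ι → ℝ) : x ⬝ᵥ y ≤ en x * en y := by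
  rw [en_eq_norm, en_eq_norm]
  have := real_inner_le_norm ((WithLp.equiv 2 (ι → ℝ)).symm x) ((WithLp.equiv 2 (ι → ℝ)).symm y)
  rw [dotProduct_comm]
  simpa [PiLp.inner_apply, dotProduct] using this

lemma en_orth {m ι : Type*} [Fintype m] [Fintype ι] [DecidableEq ι]
    (B : Matrix m ι ℝ) (hB : Bᵀ * B = 1) (x : ι → ℝ) : en (B *ᵥ x) = en x := by
  have h : (B *ᵥ x) ⬝ᵥ (B *ᵥ x) = x ⬝ᵥ x := by
    rw [Matrix.dotProduct_mulVec, ← Matrix.vecMul_transpose B x, Matrix.vecMul_vecMul, hB]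
    simp
  rw [en, en]
  congr 1
  simpa [dotProduct, sq] using h

lemma selMat_orth {n : ℕ} (M : Finset (Fin n)) : (selMat M)ᵀ * selMat M = 1 := by
  ext j k
  simp only [Matrix.mul_apply, Matrix.transpose_apply, selMat, Matrix.one_apply]
  rw [Finset.sum_eq_single (j : Fin n)]
  · by_cases h : j = k
    · subst h; simp
    · have : ¬ ((k : Fin n) = (j : Fin n)) := fun hc => h (Subtype.ext hc.symm)
      simp [this, h]
  · intro b _ hb
    simp [Ne.symm hb]
  · simp

lemma selMatT_apply {n : ℕ} (M : Finset (Fin n)) (w : Fin n → ℝ) (j : {i // i ∈ M}) :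
    ((selMat M)ᵀ *ᵥ w) j = w j := by
  simp only [Matrix.mulVec, Matrix.transpose_apply, selMat, dotProduct]
  rw [Finset.sum_eq_single (j : Fin n)] <;> simp +contextual [eq_comm]

lemma en_selT_le {n : ℕ} (M : Finset (Fin n)) (w : Fin n → ℝ) :
    en ((selMat M)ᵀ *ᵥ w) ≤ en w := by
  apply Real.sqrt_le_sqrt
  calc ∑ j, ((selMat M)ᵀ *ᵥ w) j ^ 2 = ∑ j : {i // i ∈ M}, w j ^ 2 := by
        simp [selMatT_apply]
    _ = ∑ i ∈ M, w i ^ 2 := Finset.sum_coe_sort M (fun i => w i ^ 2)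
    _ ≤ ∑ i, w i ^ 2 :=
        Finset.sum_le_sum_of_subset_of_nonneg (Finset.subset_univ M)
          (fun i _ _ => sq_nonneg _)

theorem projected_LS_error_bound
    {n r : ℕ} (P Phat : Matrix (Fin n) (Fin r) ℝ)
    (hP : Pᵀ * P = 1) (hPhat : Phatᵀ * Phat = 1)
    (M : Finset (Fin n)) (ltil l v a : Fin n → ℝ) (aco : Fin r → ℝ)
    (hl : l = P *ᵥ aco) (hv : v = ltil - l) :
    let Ψ : Matrix (Fin n) (Fin n) ℝ := 1 - Phat * Phatᵀ
    let ΨM := Ψ * selMat M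
    let G := ΨMᵀ * ΨM
    ∀ (_ : IsUnit G),
    let lhat := ltil - selMat M *ᵥ (G⁻¹ *ᵥ (ΨMᵀ *ᵥ ltil))
    (lhat - ltil = -(selMat M *ᵥ (G⁻¹ *ᵥ ((selMat M)ᵀ *ᵥ (Ψ *ᵥ (l + v)))))) ∧
    enorm' (lhat - ltil) ≤ specNorm G⁻¹ * (distP Phat P * enorm' l + enorm' v) := by
  intro Ψ ΨM G hG lhat
  have hΨs : Ψᵀ = Ψ := by
    show (1 - Phat * Phatᵀ)ᵀ = 1 - Phat * Phatᵀ
    simp [Matrix.transpose_sub, Matrix.transpose_mul]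
  have hΨ2 : Ψ * Ψ = Ψ := by
    show (1 - Phat * Phatᵀ) * (1 - Phat * Phatᵀ) = 1 - Phat * Phatᵀ
    have h : Phat * Phatᵀ * (Phat * Phatᵀ) = Phat * Phatᵀ := by
      rw [Matrix.mul_assoc, ← Matrix.mul_assoc Phatᵀ, hPhat, Matrix.one_mul]
    rw [Matrix.sub_mul, Matrix.mul_sub, Matrix.mul_sub, h]
    simp
  have hlv : l + v = ltil := by rw [hv]; abel
  have hΨMt : ΨMᵀ = (selMat M)ᵀ * Ψ := by
    show (Ψ * selMat M)ᵀ = _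
    rw [Matrix.transpose_mul, hΨs]
  have heq : lhat - ltil
      = -(selMat M *ᵥ (G⁻¹ *ᵥ ((selMat M)ᵀ *ᵥ (Ψ *ᵥ (l + v))))) := by
    rw [hlv]
    show ltil - selMat M *ᵥ (G⁻¹ *ᵥ (ΨMᵀ *ᵥ ltil)) - ltil = _
    rw [sub_sub_cancel_left, hΨMt, ← Matrix.mulVec_mulVec]
  refine ⟨heq, ?_⟩
  rw [enorm_eq_en, enorm_eq_en, enorm_eq_en, heq, en_neg,
    en_orth (selMat M) (selMat_orth M) _]
  have hG0 : (0 : ℝ) ≤ specNorm G⁻¹ := norm_nonneg _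
  calc en (G⁻¹ *ᵥ ((selMat M)ᵀ *ᵥ (Ψ *ᵥ (l + v))))
      ≤ specNorm G⁻¹ * en ((selMat M)ᵀ *ᵥ (Ψ *ᵥ (l + v))) := mulVec_en_le _ _
    _ ≤ specNorm G⁻¹ * (distP Phat P * en l + en v) := by
        apply mul_le_mul_of_nonneg_left _ hG0
        calc en ((selMat M)ᵀ *ᵥ (Ψ *ᵥ (l + v))) ≤ en (Ψ *ᵥ (l + v)) := en_selT_le _ _
          _ = en (Ψ *ᵥ l + Ψ *ᵥ v) := by rw [Matrix.mulVec_add]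
          _ ≤ en (Ψ *ᵥ l) + en (Ψ *ᵥ v) := en_add_le _ _
          _ ≤ distP Phat P * en l + en v := by
              gcongr
              · -- en (Ψ *ᵥ l) ≤ distP Phat P * en l
                rw [hl, Matrix.mulVec_mulVec]
                calc en ((Ψ * P) *ᵥ aco) ≤ specNorm (Ψ * P) * en aco := mulVec_en_le _ _
                  _ = distP Phat P * en (P *ᵥ aco) := by
                      rw [en_orth P hP aco]; rfl
              · -- en (Ψ *ᵥ v) ≤ en v
                have hkey : (Ψ *ᵥ v) ⬝ᵥ v ≤ en (Ψ *ᵥ v) * en v := cs _ _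
                have hsq : en (Ψ *ᵥ v) * en (Ψ *ᵥ v) = (Ψ *ᵥ v) ⬝ᵥ v := by
                  have h1 : (Ψ *ᵥ v) ⬝ᵥ (Ψ *ᵥ v) = (Ψ *ᵥ v) ⬝ᵥ v := by
                    rw [Matrix.dotProduct_mulVec, ← Matrix.vecMul_transpose Ψ v,
                      Matrix.vecMul_vecMul, hΨs, hΨ2]
                  have h2 := en_eq_norm (Ψ *ᵥ v)
                  have : en (Ψ *ᵥ v) ^ 2 = (Ψ *ᵥ v) ⬝ᵥ (Ψ *ᵥ v) := by
                    rw [en, Real.sq_sqrt (by positivity)]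
                    simp [dotProduct, sq]
                  rw [← sq, this, h1]
                rcases eq_or_lt_of_le (en_nonneg (Ψ *ᵥ v)) with h | h
                · rw [← h]; exact en_nonneg v
                · have := hsq.le.trans hkey
                  exact le_of_mul_le_mul_left this h
end

section
/- One noisy power-method step error bound: let A = UΣU^⊤ + U_⊥Σ_⊥U_⊥^⊤ be symmetric PSD with σ_r > 0, let Û₀ be n×r with orthonormal columns, W an n×r noise matrix, and Ũ := AÛ₀ + W. If √(1 − dist²(Û₀,U)) > ‖Σ^{−1}U^⊤W‖ (so that U^⊤Ũ has full rank r), then for the Q factor Û of the QR decomposition of Ũ: dist(Û,U) ≤ (R·dist(Û₀,U) + σ_r^{−1}‖U_⊥^⊤W‖) / (√(1 − dist²(Û₀,U)) − ‖Σ^{−1}U^⊤W‖), where R := σ_{r+1}/σ_r. -/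
open Matrix BigOperators

noncomputable def enorm {n : ℕ} (v : Fin n → ℝ) : ℝ :=
  Real.sqrt (∑ i, v i ^ 2)

open scoped Matrix.Norms.L2Operator RealInnerProductSpace
set_option linter.unusedSectionVars false

section infra
variable {l m n : Type*} [Fintype l] [Fintype m] [Fintype n]
  [DecidableEq l] [DecidableEq m] [DecidableEq n]

lemma specNorm_eq (A : Matrix m n ℝ) : specNorm A = ‖A‖ := rfl

lemma conjT_eq_T (A : Matrix m n ℝ) : Aᴴ = Aᵀ := by
  ext i j; simp [Matrix.conjTranspose_apply]

lemma normT (A : Matrix m n ℝ) : ‖Aᵀ‖ = ‖A‖ := by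
  rw [← conjT_eq_T]; exact Matrix.l2_opNorm_conjTranspose A

lemma normTmul (A : Matrix m n ℝ) : ‖Aᵀ * A‖ = ‖A‖ * ‖A‖ := by
  rw [← conjT_eq_T]; exact Matrix.l2_opNorm_conjTranspose_mul_self A

lemma TL_apply (A : Matrix m n ℝ) (x : EuclideanSpace ℝ n) :
    (LinearMap.toContinuousLinearMap (Matrix.toEuclideanLin A)) x
      = Matrix.toEuclideanLin A x := rfl

lemma TL_le (A : Matrix m n ℝ) (x : EuclideanSpace ℝ n) :
    ‖Matrix.toEuclideanLin A x‖ ≤ ‖A‖ * ‖x‖ :=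
  (LinearMap.toContinuousLinearMap (Matrix.toEuclideanLin A)).le_opNorm x

lemma norm_le_of_bound (A : Matrix m n ℝ) {c : ℝ} (hc : 0 ≤ c)
    (h : ∀ x : EuclideanSpace ℝ n, ‖Matrix.toEuclideanLin A x‖ ≤ c * ‖x‖) :
    ‖A‖ ≤ c :=
  ContinuousLinearMap.opNorm_le_bound _ hc h

lemma TL_mul (A : Matrix m n ℝ) (B : Matrix n l ℝ) (x : EuclideanSpace ℝ l) :
    Matrix.toEuclideanLin (A * B) x
      = Matrix.toEuclideanLin A (Matrix.toEuclideanLin B x) := by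
  simp [Matrix.toEuclideanLin_apply, Matrix.mulVec_mulVec]

lemma TL_one (x : EuclideanSpace ℝ n) :
    Matrix.toEuclideanLin (1 : Matrix n n ℝ) x = x := by
  simp [Matrix.toEuclideanLin_apply]

lemma TL_inner (A : Matrix m n ℝ) (x : EuclideanSpace ℝ n) (y : EuclideanSpace ℝ m) :
    ⟪Matrix.toEuclideanLin A x, y⟫ = ⟪x, Matrix.toEuclideanLin Aᵀ y⟫ := by
  rw [← conjT_eq_T, Matrix.toEuclideanLin_conjTranspose_eq_adjoint,
    LinearMap.adjoint_inner_right]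

end infra

section infra2
variable {m n : Type*} [Fintype m] [Fintype n] [DecidableEq m] [DecidableEq n]

lemma norm_one_le' : ‖(1 : Matrix n n ℝ)‖ ≤ 1 := by
  apply norm_le_of_bound _ zero_le_one
  intro x; rw [TL_one, one_mul]

lemma norm_le_one_of_orth {Q : Matrix m n ℝ} (h : Qᵀ * Q = 1) : ‖Q‖ ≤ 1 := by
  have h1 := normTmul Q
  rw [h] at h1
  nlinarith [norm_nonneg Q, norm_one_le' (n := n)]

lemma proj_norm_le_one {Q : Matrix m n ℝ} (h : Qᵀ * Q = 1) :
    ‖(1 : Matrix m m ℝ) - Q * Qᵀ‖ ≤ 1 := by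
  set P : Matrix m m ℝ := 1 - Q * Qᵀ with hP
  have hPT : Pᵀ = P := by
    simp [hP, Matrix.transpose_sub, Matrix.transpose_mul]
  have hQQ : Q * Qᵀ * (Q * Qᵀ) = Q * Qᵀ := by
    calc Q * Qᵀ * (Q * Qᵀ) = Q * (Qᵀ * Q) * Qᵀ := by
          simp [Matrix.mul_assoc]
      _ = Q * Qᵀ := by rw [h]; simp
  have hPP : P * P = P := by
    simp [hP, Matrix.mul_sub, Matrix.sub_mul, hQQ]
  have h1 : ‖P‖ * ‖P‖ = ‖P‖ := by
    rw [← normTmul P, hPT, hPP]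
  nlinarith [norm_nonneg P]

lemma diag_norm_le {v : n → ℝ} {c : ℝ} (hc : 0 ≤ c) (h : ∀ i, |v i| ≤ c) :
    ‖Matrix.diagonal v‖ ≤ c := by
  apply norm_le_of_bound _ hc
  intro x
  rw [Matrix.toEuclideanLin_apply]
  rw [EuclideanSpace.norm_eq, EuclideanSpace.norm_eq]
  have key : ∑ i, ‖(WithLp.equiv 2 (n → ℝ)).symm
      (Matrix.diagonal v *ᵥ (WithLp.equiv 2 (n → ℝ)) x) i‖ ^ 2
      ≤ c ^ 2 * ∑ i, ‖x i‖ ^ 2 := by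
    rw [Finset.mul_sum]
    apply Finset.sum_le_sum
    intro i _
    simp only [WithLp.equiv_symm_apply, WithLp.equiv_apply, PiLp.toLp_apply, Matrix.mulVec_diagonal]
    have h1 : (v i) ^ 2 ≤ c ^ 2 := by
      have := h i; nlinarith [abs_nonneg (v i), le_abs_self (v i), neg_abs_le (v i)]
    have h2 : ‖x i‖ ^ 2 = (x i) ^ 2 := by
      rw [Real.norm_eq_abs, sq_abs]
    rw [Real.norm_eq_abs, sq_abs, h2, mul_pow]
    nlinarith [sq_nonneg (x i)]
  refine le_trans (Real.sqrt_le_sqrt key) (le_of_eq ?_)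
  rw [Real.sqrt_mul (sq_nonneg c), Real.sqrt_sq hc]

lemma inner_TL_le (S : Matrix n n ℝ) (x : EuclideanSpace ℝ n) :
    ⟪x, Matrix.toEuclideanLin S x⟫ ≤ ‖S‖ * (‖x‖ * ‖x‖) := by
  calc ⟪x, Matrix.toEuclideanLin S x⟫ ≤ ‖x‖ * ‖Matrix.toEuclideanLin S x‖ :=
        real_inner_le_norm _ _
    _ ≤ ‖x‖ * (‖S‖ * ‖x‖) := by
        have := TL_le S x
        nlinarith [norm_nonneg x]
    _ = ‖S‖ * (‖x‖ * ‖x‖) := by ring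

lemma inv_bound (B : Matrix n n ℝ) {c : ℝ} (hc : 0 < c)
    (h : ∀ x : EuclideanSpace ℝ n, c * ‖x‖ ≤ ‖Matrix.toEuclideanLin B x‖) :
    IsUnit B.det ∧ ‖B⁻¹‖ ≤ c⁻¹ := by
  have hdet : B.det ≠ 0 := by
    intro h0
    obtain ⟨v, hv, hBv⟩ := Matrix.exists_mulVec_eq_zero_iff.2 h0
    set x : EuclideanSpace ℝ n := (WithLp.equiv 2 (n → ℝ)).symm v with hx
    have h1 := h x
    have h2 : Matrix.toEuclideanLin B x = 0 := by
      rw [Matrix.toEuclideanLin_apply]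
      simp [hx, hBv]
    rw [h2, norm_zero] at h1
    have hxne : x ≠ 0 := by
      simp only [hx, ne_eq]
      intro hcon
      apply hv
      simpa using congrArg (WithLp.equiv 2 (n → ℝ)) hcon
    have := norm_pos_iff.2 hxne
    nlinarith
  have hu : IsUnit B.det := isUnit_iff_ne_zero.2 hdet
  refine ⟨hu, ?_⟩
  apply norm_le_of_bound _ (inv_nonneg.2 hc.le)
  intro y
  have key : Matrix.toEuclideanLin B (Matrix.toEuclideanLin B⁻¹ y) = y := by
    rw [← TL_mul, Matrix.mul_nonsing_inv _ hu, TL_one]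
  have h1 := h (Matrix.toEuclideanLin B⁻¹ y)
  rw [key] at h1
  calc ‖Matrix.toEuclideanLin B⁻¹ y‖ = c⁻¹ * (c * ‖Matrix.toEuclideanLin B⁻¹ y‖) := by
        field_simp
    _ ≤ c⁻¹ * ‖y‖ := by
        apply mul_le_mul_of_nonneg_left h1 (inv_nonneg.2 hc.le)

lemma lower_transpose (B : Matrix n n ℝ) {c : ℝ}
    (h : ∀ x : EuclideanSpace ℝ n, c * ‖x‖ ≤ ‖Matrix.toEuclideanLin Bᵀ x‖) :
    ∀ x : EuclideanSpace ℝ n, c * ‖x‖ ≤ ‖Matrix.toEuclideanLin B x‖ := by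
  rcases le_or_gt c 0 with hc | hc
  · intro x
    exact le_trans (mul_nonpos_of_nonpos_of_nonneg hc (norm_nonneg x)) (norm_nonneg _)
  · obtain ⟨hdet, hinv⟩ := inv_bound Bᵀ hc h
    have hdetB : IsUnit B.det := by rwa [Matrix.det_transpose] at hdet
    have hnormBinv : ‖B⁻¹‖ ≤ c⁻¹ := by
      rw [← normT, Matrix.transpose_nonsing_inv]; exact hinv
    intro x
    have key : Matrix.toEuclideanLin B⁻¹ (Matrix.toEuclideanLin B x) = x := by
      rw [← TL_mul, Matrix.nonsing_inv_mul _ hdetB, TL_one]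
    have h2 : ‖x‖ ≤ c⁻¹ * ‖Matrix.toEuclideanLin B x‖ := by
      calc ‖x‖ = ‖Matrix.toEuclideanLin B⁻¹ (Matrix.toEuclideanLin B x)‖ := by rw [key]
        _ ≤ ‖B⁻¹‖ * ‖Matrix.toEuclideanLin B x‖ := TL_le _ _
        _ ≤ c⁻¹ * ‖Matrix.toEuclideanLin B x‖ := by
            apply mul_le_mul_of_nonneg_right hnormBinv (norm_nonneg _)
    calc c * ‖x‖ ≤ c * (c⁻¹ * ‖Matrix.toEuclideanLin B x‖) :=
          mul_le_mul_of_nonneg_left h2 hc.le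
      _ = ‖Matrix.toEuclideanLin B x‖ := by field_simp

lemma norm_zero_of_isEmpty_right [IsEmpty n] (A : Matrix m n ℝ) : ‖A‖ = 0 := by
  have : A = 0 := by ext i j; exact isEmptyElim j
  rw [this, norm_zero]

lemma norm_zero_of_isEmpty_left [IsEmpty m] (A : Matrix m n ℝ) : ‖A‖ = 0 := by
  have : A = 0 := by ext i j; exact isEmptyElim i
  rw [this, norm_zero]

end infra2


section helpers

/-- A square matrix with orthonormal columns (and its "transpose-orthogonality" via a
complete square system) satisfies `Q * Qᵀ = 1`, given `U` with `UᵀU = 1` and `UUᵀ = 1`. -/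
lemma full_flip {n r : ℕ} {U Q : Matrix (Fin n) (Fin r) ℝ}
    (hUl : Uᵀ * U = 1) (hUr : U * Uᵀ = 1) (hQ : Qᵀ * Q = 1) : Q * Qᵀ = 1 := by
  have hC : (Uᵀ * Q)ᵀ * (Uᵀ * Q) = 1 := by
    calc (Uᵀ * Q)ᵀ * (Uᵀ * Q) = Qᵀ * ((U * Uᵀ) * Q) := by
          simp [Matrix.transpose_mul, Matrix.mul_assoc]
      _ = 1 := by rw [hUr, Matrix.one_mul, hQ]
  have hCC : (Uᵀ * Q) * (Uᵀ * Q)ᵀ = 1 := mul_eq_one_comm.mp hC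
  calc Q * Qᵀ = (U * Uᵀ) * (Q * (Qᵀ * (U * Uᵀ))) := by
        rw [hUr]; simp [Matrix.mul_assoc]
    _ = U * ((Uᵀ * Q) * (Uᵀ * Q)ᵀ) * Uᵀ := by
        simp [Matrix.transpose_mul, Matrix.mul_assoc]
    _ = 1 := by rw [hCC, Matrix.mul_one, hUr]

lemma r_le_n {n r : ℕ} {U : Matrix (Fin n) (Fin r) ℝ} (hU : Uᵀ * U = 1) : r ≤ n := by
  have h1 : (Uᵀ * U).rank = r := by rw [hU, Matrix.rank_one, Fintype.card_fin]
  have h2 : (Uᵀ * U).rank ≤ n := le_trans (Matrix.rank_mul_le_right _ _)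
    (le_trans (Matrix.rank_le_card_height U) (by simp [Fintype.card_fin]))
  omega

end helpers

set_option maxHeartbeats 2000000 in
theorem noisy_PM_one_step
    {n r : ℕ} (A : Matrix (Fin n) (Fin n) ℝ)
    (U Uhat0 Uhat W : Matrix (Fin n) (Fin r) ℝ)
    (Uperp : Matrix (Fin n) (Fin (n - r)) ℝ)
    (Rm : Matrix (Fin r) (Fin r) ℝ)
    (σ : Fin r → ℝ) (σp : Fin (n - r) → ℝ) (σr σr1 : ℝ)
    (hU : Uᵀ * U = 1) (hUp : Uperpᵀ * Uperp = 1)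
    (hU0 : Uhat0ᵀ * Uhat0 = 1) (hUhat : Uhatᵀ * Uhat = 1)
    (horth : Uᵀ * Uperp = 0)
    (hcomp : U * Uᵀ + Uperp * Uperpᵀ = 1)
    (hA : A = U * Matrix.diagonal σ * Uᵀ + Uperp * Matrix.diagonal σp * Uperpᵀ)
    (hσr : ∀ i, σr ≤ σ i) (hσrpos : 0 < σr)
    (hσpnn : ∀ i, 0 ≤ σp i) (hσr1 : ∀ i, σp i ≤ σr1)
    (hQR : A * Uhat0 + W = Uhat * Rm)
    (hdenom : specNorm ((Matrix.diagonal σ)⁻¹ * (Uᵀ * W)) <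
      Real.sqrt (1 - (distP Uhat0 U) ^ 2)) :
    distP Uhat U ≤
      ((σr1 / σr) * distP Uhat0 U + σr⁻¹ * specNorm (Uperpᵀ * W)) /
        (Real.sqrt (1 - (distP Uhat0 U) ^ 2) -
          specNorm ((Matrix.diagonal σ)⁻¹ * (Uᵀ * W))) := by
  classical
  simp only [distP, specNorm_eq] at hdenom ⊢
  -- r = 0 case
  rcases Nat.eq_zero_or_pos r with hr0 | hrpos
  · subst hr0
    haveI : IsEmpty (Fin 0) := by infer_instance
    rw [norm_zero_of_isEmpty_right ((1 - Uhat * Uhatᵀ) * U)]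
    rw [norm_zero_of_isEmpty_right ((1 - Uhat0 * Uhat0ᵀ) * U),
      norm_zero_of_isEmpty_right ((Matrix.diagonal σ)⁻¹ * (Uᵀ * W)),
      norm_zero_of_isEmpty_right (Uperpᵀ * W)]
    norm_num
  -- n = r case
  rcases Nat.eq_zero_or_pos (n - r) with hnr0 | hnrpos
  · haveI hie : IsEmpty (Fin (n - r)) := by rw [hnr0]; infer_instance
    have hUpUpT : Uperp * Uperpᵀ = 0 := by
      ext i j; simp [Matrix.mul_apply]
    have hUUT : U * Uᵀ = 1 := by rw [← hcomp, hUpUpT, add_zero]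
    have hU0f : Uhat0 * Uhat0ᵀ = 1 := full_flip hU hUUT hU0
    have hUhf : Uhat * Uhatᵀ = 1 := full_flip hU hUUT hUhat
    rw [hU0f] at hdenom ⊢
    rw [hUhf]
    simp only [sub_self, Matrix.zero_mul, norm_zero] at hdenom ⊢
    rw [norm_zero_of_isEmpty_left (Uperpᵀ * W)]
    have hpos : (0:ℝ) < Real.sqrt (1 - 0 ^ 2) - ‖(Matrix.diagonal σ)⁻¹ * (Uᵀ * W)‖ :=
      sub_pos.mpr hdenom
    rw [mul_zero, mul_zero, add_zero, zero_div]
  -- main case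
  obtain ⟨i0⟩ : Nonempty (Fin (n - r)) := ⟨⟨0, hnrpos⟩⟩
  have hσr1nn : 0 ≤ σr1 := le_trans (hσpnn i0) (hσr1 i0)
  have hσrne : σr ≠ 0 := ne_of_gt hσrpos
  have hSdet : IsUnit (Matrix.diagonal σ).det := by
    rw [Matrix.det_diagonal]
    exact isUnit_iff_ne_zero.2 (Finset.prod_ne_zero_iff.2 fun i _ =>
      ne_of_gt (lt_of_lt_of_le hσrpos (hσr i)))
  have hSinveq : (Matrix.diagonal σ)⁻¹ = Matrix.diagonal (fun i => (σ i)⁻¹) := by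
    apply Matrix.inv_eq_right_inv
    rw [Matrix.diagonal_mul_diagonal]
    convert Matrix.diagonal_one using 2
    funext i
    exact mul_inv_cancel₀ (ne_of_gt (lt_of_lt_of_le hσrpos (hσr i)))
  have hSinv : ‖(Matrix.diagonal σ)⁻¹‖ ≤ σr⁻¹ := by
    rw [hSinveq]
    apply diag_norm_le (inv_nonneg.2 hσrpos.le)
    intro i
    rw [abs_of_nonneg (inv_nonneg.2 (le_trans hσrpos.le (hσr i)))]
    exact inv_anti₀ hσrpos (hσr i)
  have hSp : ‖Matrix.diagonal σp‖ ≤ σr1 := by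
    apply diag_norm_le hσr1nn
    intro i; rw [abs_of_nonneg (hσpnn i)]; exact hσr1 i
  set d0 : ℝ := ‖(1 - Uhat0 * Uhat0ᵀ) * U‖ with hd0
  set ε : ℝ := ‖(Matrix.diagonal σ)⁻¹ * (Uᵀ * W)‖ with hε
  have hε0 : 0 ≤ ε := norm_nonneg _
  have hd00 : 0 ≤ d0 := norm_nonneg _
  have h1d0 : 0 < 1 - d0 ^ 2 := by
    by_contra hcon
    push_neg at hcon
    rw [Real.sqrt_eq_zero_of_nonpos hcon] at hdenom
    linarith
  set s : ℝ := Real.sqrt (1 - d0 ^ 2) with hs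
  have hs_sq : s ^ 2 = 1 - d0 ^ 2 := Real.sq_sqrt h1d0.le
  have hspos : 0 < s := lt_of_le_of_lt hε0 hdenom
  have hden : 0 < s - ε := sub_pos.2 hdenom
  set G : Matrix (Fin r) (Fin r) ℝ := Uᵀ * Uhat0 with hG
  have hBtB : ((1 - Uhat0 * Uhat0ᵀ) * U)ᵀ * ((1 - Uhat0 * Uhat0ᵀ) * U)
      = 1 - G * Gᵀ := by
    have hsym : (1 - Uhat0 * Uhat0ᵀ)ᵀ = 1 - Uhat0 * Uhat0ᵀ := by
      simp [Matrix.transpose_sub, Matrix.transpose_mul]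
    have hQQ : Uhat0 * Uhat0ᵀ * (Uhat0 * Uhat0ᵀ) = Uhat0 * Uhat0ᵀ := by
      calc Uhat0 * Uhat0ᵀ * (Uhat0 * Uhat0ᵀ) = Uhat0 * (Uhat0ᵀ * Uhat0) * Uhat0ᵀ := by
            simp [Matrix.mul_assoc]
        _ = Uhat0 * Uhat0ᵀ := by rw [hU0]; simp
    have hidem : (1 - Uhat0 * Uhat0ᵀ) * (1 - Uhat0 * Uhat0ᵀ) = 1 - Uhat0 * Uhat0ᵀ := by
      simp [Matrix.mul_sub, Matrix.sub_mul, hQQ]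
    calc ((1 - Uhat0 * Uhat0ᵀ) * U)ᵀ * ((1 - Uhat0 * Uhat0ᵀ) * U)
        = Uᵀ * ((1 - Uhat0 * Uhat0ᵀ) * ((1 - Uhat0 * Uhat0ᵀ) * U)) := by
          rw [Matrix.transpose_mul, hsym, Matrix.mul_assoc]
      _ = Uᵀ * ((1 - Uhat0 * Uhat0ᵀ) * U) := by
          rw [← Matrix.mul_assoc (1 - Uhat0 * Uhat0ᵀ), hidem]
      _ = 1 - G * Gᵀ := by
          rw [hG, Matrix.sub_mul, Matrix.one_mul, Matrix.mul_sub, hU,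
            Matrix.transpose_mul, Matrix.transpose_transpose]
          simp [Matrix.mul_assoc]
  have hd0sq : ‖(1 : Matrix (Fin r) (Fin r) ℝ) - G * Gᵀ‖ = d0 ^ 2 := by
    rw [← hBtB, normTmul, hd0, pow_two]
  have hGt : ∀ x : EuclideanSpace ℝ (Fin r),
      s * ‖x‖ ≤ ‖Matrix.toEuclideanLin Gᵀ x‖ := by
    intro x
    have e0 : ⟪Matrix.toEuclideanLin Gᵀ x, Matrix.toEuclideanLin Gᵀ x⟫
        = ⟪x, Matrix.toEuclideanLin (G * Gᵀ) x⟫ := by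
      rw [TL_inner Gᵀ x, Matrix.transpose_transpose, ← TL_mul]
    have e1 : ⟪x, Matrix.toEuclideanLin ((1 : Matrix (Fin r) (Fin r) ℝ) - G * Gᵀ) x⟫
        = ‖x‖ ^ 2 - ⟪x, Matrix.toEuclideanLin (G * Gᵀ) x⟫ := by
      rw [map_sub, LinearMap.sub_apply, TL_one, inner_sub_right,
        real_inner_self_eq_norm_sq]
    have e2 := inner_TL_le ((1 : Matrix (Fin r) (Fin r) ℝ) - G * Gᵀ) x
    rw [hd0sq] at e2
    have e4 : ‖Matrix.toEuclideanLin Gᵀ x‖ ^ 2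
        = ⟪Matrix.toEuclideanLin Gᵀ x, Matrix.toEuclideanLin Gᵀ x⟫ :=
      (real_inner_self_eq_norm_sq _).symm
    have e3 : (s * ‖x‖) ^ 2 ≤ ‖Matrix.toEuclideanLin Gᵀ x‖ ^ 2 := by
      rw [mul_pow, hs_sq]
      nlinarith [sq_nonneg ‖x‖]
    calc s * ‖x‖ = Real.sqrt ((s * ‖x‖) ^ 2) := (Real.sqrt_sq (by positivity)).symm
      _ ≤ Real.sqrt (‖Matrix.toEuclideanLin Gᵀ x‖ ^ 2) := Real.sqrt_le_sqrt e3
      _ = ‖Matrix.toEuclideanLin Gᵀ x‖ := Real.sqrt_sq (norm_nonneg _)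
  have hGlow := lower_transpose G hGt
  have hUpU0 : ‖Uperpᵀ * Uhat0‖ ≤ d0 := by
    apply norm_le_of_bound _ hd00
    intro x
    set v : EuclideanSpace ℝ (Fin n) := Matrix.toEuclideanLin Uhat0 x with hv
    have ev : Matrix.toEuclideanLin (Uperpᵀ * Uhat0) x = Matrix.toEuclideanLin Uperpᵀ v :=
      TL_mul _ _ _
    have e0 : ⟪Matrix.toEuclideanLin Uperpᵀ v, Matrix.toEuclideanLin Uperpᵀ v⟫
        = ⟪v, Matrix.toEuclideanLin (Uperp * Uperpᵀ) v⟫ := by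
      rw [TL_inner Uperpᵀ v, Matrix.transpose_transpose, ← TL_mul]
    have hUpUpT : Uperp * Uperpᵀ = 1 - U * Uᵀ := eq_sub_of_add_eq' hcomp
    have e1 : ⟪Matrix.toEuclideanLin Uᵀ v, Matrix.toEuclideanLin Uᵀ v⟫
        = ⟪v, Matrix.toEuclideanLin (U * Uᵀ) v⟫ := by
      rw [TL_inner Uᵀ v, Matrix.transpose_transpose, ← TL_mul]
    have e2 : ⟪v, v⟫ = ‖x‖ ^ 2 := by
      rw [hv, TL_inner Uhat0, ← TL_mul, hU0, TL_one, real_inner_self_eq_norm_sq]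
    have e3 : s * ‖x‖ ≤ ‖Matrix.toEuclideanLin Uᵀ v‖ := by
      have h7 : Matrix.toEuclideanLin Uᵀ v = Matrix.toEuclideanLin G x := by
        rw [hv, ← TL_mul, hG]
      rw [h7]; exact hGlow x
    have e5 : ‖Matrix.toEuclideanLin Uᵀ v‖ ^ 2
        = ⟪Matrix.toEuclideanLin Uᵀ v, Matrix.toEuclideanLin Uᵀ v⟫ :=
      (real_inner_self_eq_norm_sq _).symm
    have e4 : ‖Matrix.toEuclideanLin (Uperpᵀ * Uhat0) x‖ ^ 2 ≤ (d0 * ‖x‖) ^ 2 := by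
      have h5 : ‖Matrix.toEuclideanLin (Uperpᵀ * Uhat0) x‖ ^ 2
          = ⟪v, v⟫ - ⟪Matrix.toEuclideanLin Uᵀ v, Matrix.toEuclideanLin Uᵀ v⟫ := by
        rw [ev, ← real_inner_self_eq_norm_sq, e0, hUpUpT, map_sub, LinearMap.sub_apply,
          TL_one, inner_sub_right, e1]
      have h6 : (s * ‖x‖) ^ 2 ≤ ‖Matrix.toEuclideanLin Uᵀ v‖ ^ 2 := by
        rw [pow_two, pow_two]
        exact mul_self_le_mul_self (by positivity) e3
      rw [h5, e2]
      rw [mul_pow] at h6 ⊢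
      rw [hs_sq] at h6
      nlinarith [e5]
    calc ‖Matrix.toEuclideanLin (Uperpᵀ * Uhat0) x‖
        = Real.sqrt (‖Matrix.toEuclideanLin (Uperpᵀ * Uhat0) x‖ ^ 2) :=
          (Real.sqrt_sq (norm_nonneg _)).symm
      _ ≤ Real.sqrt ((d0 * ‖x‖) ^ 2) := Real.sqrt_le_sqrt e4
      _ = d0 * ‖x‖ := Real.sqrt_sq (by positivity)
  set E : Matrix (Fin r) (Fin r) ℝ := (Matrix.diagonal σ)⁻¹ * (Uᵀ * W) with hE
  set Y : Matrix (Fin r) (Fin r) ℝ := G + E with hY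
  have hYlow : ∀ x : EuclideanSpace ℝ (Fin r),
      (s - ε) * ‖x‖ ≤ ‖Matrix.toEuclideanLin Yᵀ x‖ := by
    intro x
    have h1 : Matrix.toEuclideanLin Yᵀ x
        = Matrix.toEuclideanLin Gᵀ x + Matrix.toEuclideanLin Eᵀ x := by
      rw [hY, Matrix.transpose_add, map_add, LinearMap.add_apply]
    have h2 : ‖Matrix.toEuclideanLin Eᵀ x‖ ≤ ε * ‖x‖ := by
      refine le_trans (TL_le _ _) ?_
      have hEn : ‖Eᵀ‖ = ε := by rw [normT, hε, hE]
      rw [hEn]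
    have h3 := hGt x
    have h4 : ‖Matrix.toEuclideanLin Gᵀ x‖
        ≤ ‖Matrix.toEuclideanLin Yᵀ x‖ + ‖Matrix.toEuclideanLin Eᵀ x‖ := by
      calc ‖Matrix.toEuclideanLin Gᵀ x‖
          = ‖(Matrix.toEuclideanLin Gᵀ x + Matrix.toEuclideanLin Eᵀ x)
              - Matrix.toEuclideanLin Eᵀ x‖ := by rw [add_sub_cancel_right]
        _ ≤ ‖Matrix.toEuclideanLin Gᵀ x + Matrix.toEuclideanLin Eᵀ x‖
              + ‖Matrix.toEuclideanLin Eᵀ x‖ := norm_sub_le _ _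
        _ = ‖Matrix.toEuclideanLin Yᵀ x‖ + ‖Matrix.toEuclideanLin Eᵀ x‖ := by rw [h1]
    have hexp := sub_mul s ε ‖x‖
    linarith
  obtain ⟨hYtdet, hYtinv⟩ := inv_bound Yᵀ hden hYlow
  have hYdet : IsUnit Y.det := by rwa [Matrix.det_transpose] at hYtdet
  have hYinv : ‖Y⁻¹‖ ≤ (s - ε)⁻¹ := by
    rw [← normT, Matrix.transpose_nonsing_inv]; exact hYtinv
  set X : Matrix (Fin r) (Fin r) ℝ := Matrix.diagonal σ * Y with hX
  have hXdet : IsUnit X.det := by rw [hX, Matrix.det_mul]; exact hSdet.mul hYdet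
  have hXinv : ‖X⁻¹‖ ≤ (s - ε)⁻¹ * σr⁻¹ := by
    rw [hX, Matrix.mul_inv_rev]
    refine le_trans (Matrix.l2_opNorm_mul _ _) ?_
    exact mul_le_mul hYinv hSinv (norm_nonneg _) (inv_nonneg.2 hden.le)
  have hSE : Matrix.diagonal σ * E = Uᵀ * W := by
    rw [hE, ← Matrix.mul_assoc, Matrix.mul_nonsing_inv _ hSdet, Matrix.one_mul]
  have hXalt : X = Matrix.diagonal σ * G + Uᵀ * W := by
    rw [hX, hY, Matrix.mul_add, hSE]
  set M : Matrix (Fin n) (Fin n) ℝ := 1 - Uhat * Uhatᵀ with hM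
  set Z : Matrix (Fin (n - r)) (Fin r) ℝ :=
    Matrix.diagonal σp * (Uperpᵀ * Uhat0) + Uperpᵀ * W with hZ
  have hW2 : U * (Uᵀ * W) + Uperp * (Uperpᵀ * W) = W := by
    have h := congrArg (fun B => B * W) hcomp
    simpa [Matrix.add_mul, Matrix.mul_assoc] using h
  have hdecomp : U * X + Uperp * Z = Uhat * Rm := by
    rw [← hQR, hXalt, hZ, hG, hA]
    rw [Matrix.mul_add, Matrix.mul_add, Matrix.add_mul]
    conv_rhs => rw [← hW2]
    simp only [Matrix.mul_assoc]
    abel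
  have hMUhat : M * (Uhat * Rm) = 0 := by
    have h1 : M * Uhat = 0 := by
      rw [hM, Matrix.sub_mul, Matrix.one_mul, Matrix.mul_assoc, hUhat,
        Matrix.mul_one, sub_self]
    rw [← Matrix.mul_assoc, h1, Matrix.zero_mul]
  have hMUX : M * (U * X) = -(M * (Uperp * Z)) := by
    have h0 : M * (U * X) + M * (Uperp * Z) = 0 := by
      rw [← Matrix.mul_add, hdecomp, hMUhat]
    exact eq_neg_of_add_eq_zero_left h0
  have hMnorm : ‖M‖ ≤ 1 := proj_norm_le_one hUhat
  have hUperpn : ‖Uperp‖ ≤ 1 := norm_le_one_of_orth hUp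
  have hZn : ‖Z‖ ≤ σr1 * d0 + ‖Uperpᵀ * W‖ := by
    rw [hZ]
    refine le_trans (norm_add_le _ _) ?_
    have h1 : ‖Matrix.diagonal σp * (Uperpᵀ * Uhat0)‖ ≤ σr1 * d0 :=
      le_trans (Matrix.l2_opNorm_mul _ _)
        (mul_le_mul hSp hUpU0 (norm_nonneg _) hσr1nn)
    linarith
  have hMUZn : ‖M * (Uperp * Z)‖ ≤ σr1 * d0 + ‖Uperpᵀ * W‖ := by
    have hnn : (0:ℝ) ≤ σr1 * d0 + ‖Uperpᵀ * W‖ :=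
      add_nonneg (mul_nonneg hσr1nn hd00) (norm_nonneg _)
    have h2 : ‖Uperp * Z‖ ≤ σr1 * d0 + ‖Uperpᵀ * W‖ := by
      refine le_trans (Matrix.l2_opNorm_mul _ _) ?_
      calc ‖Uperp‖ * ‖Z‖ ≤ 1 * (σr1 * d0 + ‖Uperpᵀ * W‖) :=
            mul_le_mul hUperpn hZn (norm_nonneg _) zero_le_one
        _ = σr1 * d0 + ‖Uperpᵀ * W‖ := one_mul _
    refine le_trans (Matrix.l2_opNorm_mul _ _) ?_
    calc ‖M‖ * ‖Uperp * Z‖ ≤ 1 * (σr1 * d0 + ‖Uperpᵀ * W‖) :=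
          mul_le_mul hMnorm h2 (norm_nonneg _) zero_le_one
      _ = σr1 * d0 + ‖Uperpᵀ * W‖ := one_mul _
  have hfinal : ‖M * U‖ ≤ (σr1 * d0 + ‖Uperpᵀ * W‖) * ((s - ε)⁻¹ * σr⁻¹) := by
    have h1 : M * U = M * (U * X) * X⁻¹ := by
      calc M * U = M * U * (X * X⁻¹) := by
            rw [Matrix.mul_nonsing_inv _ hXdet, Matrix.mul_one]
        _ = M * (U * X) * X⁻¹ := by simp only [Matrix.mul_assoc]
    rw [h1, hMUX, Matrix.neg_mul, norm_neg]
    refine le_trans (Matrix.l2_opNorm_mul _ _) ?_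
    have hnn : (0:ℝ) ≤ σr1 * d0 + ‖Uperpᵀ * W‖ :=
      add_nonneg (mul_nonneg hσr1nn hd00) (norm_nonneg _)
    exact mul_le_mul hMUZn hXinv (norm_nonneg _) hnn
  refine le_trans hfinal (le_of_eq ?_)
  have hne1 : s - ε ≠ 0 := ne_of_gt hden
  field_simp
end
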